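/- Suppose every node has degree d_i ≥ 1 (so D > 0), and let α_p = (1−p)·Σ_{v_i∈V} d_i² / Σ_{v_i∈V} d_i·[(1−p)·d_i + p] for p ∈ [0,1]. Then 0 ≤ 1 − α_p ≤ p, and consequently |n − α_p·n| ≤ |n − (1−p)·n|. -/

import Mathlib

open Finset

/-- The coefficient `α_p = (1−p)·Σ_i d_i² / Σ_i d_i·[(1−p)·d_i + p]`. -/
noncomputable def alphaP {n : ℕ} (G : SimpleGraph (Fin n)) [DecidableRel G.Adj] (p : ℝ) : ℝ :=
  ((1 - p) * ∑ i, (G.degree i : ℝ) ^ 2) /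
    ∑ i, (G.degree i : ℝ) * ((1 - p) * (G.degree i : ℝ) + p)

/-- Corollary 4.7. Suppose every node of the finite simple graph `G`
on `n ≥ 1` nodes has degree `d_i ≥ 1` (so `D > 0`), and let
`α_p = (1−p)·Σ_i d_i² / Σ_i d_i·[(1−p)·d_i + p]` for `p ∈ [0,1]`.  Then
`0 ≤ 1 − α_p ≤ p`, and consequently `|n − α_p·n| ≤ |n − (1−p)·n|`. -/
theorem stmt_15 (n : ℕ) (hn : 1 ≤ n) (G : SimpleGraph (Fin n)) [DecidableRel G.Adj]
    (p : ℝ) (hp0 : 0 ≤ p) (hp1 : p ≤ 1) (hdeg : ∀ i, 1 ≤ G.degree i) :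
    (0 ≤ 1 - alphaP G p ∧ 1 - alphaP G p ≤ p) ∧
      |(n : ℝ) - alphaP G p * (n : ℝ)| ≤ |(n : ℝ) - (1 - p) * (n : ℝ)| := by
  set S1 : ℝ := ∑ i, (G.degree i : ℝ) with hS1
  set S2 : ℝ := ∑ i, (G.degree i : ℝ) ^ 2 with hS2
  have hd1 : ∀ i, (1 : ℝ) ≤ (G.degree i : ℝ) := fun i => by exact_mod_cast hdeg i
  have hS1pos : 0 < S1 := by
    have : (0 : ℝ) < ∑ _i : Fin n, (1 : ℝ) := by
      simp [Finset.card_univ]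
      exact_mod_cast Nat.lt_of_lt_of_le Nat.zero_lt_one hn
    exact lt_of_lt_of_le this (Finset.sum_le_sum fun i _ => hd1 i)
  have hS12 : S1 ≤ S2 := by
    apply Finset.sum_le_sum
    intro i _
    have h := hd1 i
    nlinarith
  have hDen : (∑ i, (G.degree i : ℝ) * ((1 - p) * (G.degree i : ℝ) + p))
      = (1 - p) * S2 + p * S1 := by
    rw [hS1, hS2, Finset.mul_sum, Finset.mul_sum, ← Finset.sum_add_distrib]
    apply Finset.sum_congr rfl
    intro i _
    ring
  have hDpos : 0 < (1 - p) * S2 + p * S1 := by nlinarith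
  have halpha : alphaP G p = (1 - p) * S2 / ((1 - p) * S2 + p * S1) := by
    rw [alphaP, hDen]
  have h1a : 1 - alphaP G p = p * S1 / ((1 - p) * S2 + p * S1) := by
    rw [halpha]
    field_simp
    ring
  have h0 : 0 ≤ 1 - alphaP G p := by
    rw [h1a]
    positivity
  have hle : 1 - alphaP G p ≤ p := by
    rw [h1a, div_le_iff₀ hDpos]
    nlinarith [mul_nonneg (mul_nonneg hp0 (sub_nonneg.mpr hp1)) (sub_nonneg.mpr hS12)]
  refine ⟨⟨h0, hle⟩, ?_⟩
  have hn0 : (0 : ℝ) ≤ (n : ℝ) := Nat.cast_nonneg n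
  have e1 : (n : ℝ) - alphaP G p * n = (1 - alphaP G p) * n := by ring
  have e2 : (n : ℝ) - (1 - p) * n = p * n := by ring
  rw [e1, e2, abs_of_nonneg (by positivity), abs_of_nonneg (by positivity)]
  exact mul_le_mul_of_nonneg_right hle hn0
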